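/- Let M and N be finitely generated free ℤ-modules of the same finite rank, and let f : M → N be a ℤ-linear injection with finite cokernel of cardinality c. Then the induced map μ : (1/c)·M / M → N / cN (defined by sending the class of (1/c)·m to the class of the unique n with c·n = c·f(m), i.e. induced by f after inverting c and reducing mod c) has kernel isomorphic as an abelian group to coker f. -/
import Mathlib


/-- For `f : M → N` an injective ℤ-linear map of finite free ℤ-modules of
equal rank with finite cokernel of cardinality `c`, the kernel of the induced map
`M/cM → N/cN` is isomorphic to `coker f`. -/
theorem stmt0 {M N : Type*} [AddCommGroup M] [AddCommGroup N]
    [Module ℤ M] [Module ℤ N]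
    [Module.Free ℤ M] [Module.Free ℤ N] [Module.Finite ℤ M] [Module.Finite ℤ N]
    (hrank : Module.finrank ℤ M = Module.finrank ℤ N)
    (f : M →ₗ[ℤ] N) (hf : Function.Injective f)
    [Finite (N ⧸ LinearMap.range f)]
    (c : ℤ) (hc : c = Nat.card (N ⧸ LinearMap.range f)) :
    Nonempty
      ((QuotientAddGroup.map (zsmulAddGroupHom c).range (zsmulAddGroupHom c).range
          f.toAddMonoidHom
          (by
            rintro x ⟨m, rfl⟩
            simp only [AddSubgroup.mem_comap, AddMonoidHom.mem_range]
            exact ⟨f m, by simp [zsmulAddGroupHom_apply, map_zsmul]⟩)).ker ≃+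
        (N ⧸ LinearMap.range f)) := by
  classical
  set μ := (QuotientAddGroup.map (zsmulAddGroupHom c).range
      (zsmulAddGroupHom c).range f.toAddMonoidHom
      (by
        rintro x ⟨m, rfl⟩
        simp only [AddSubgroup.mem_comap, AddMonoidHom.mem_range]
        exact ⟨f m, by simp [zsmulAddGroupHom_apply, map_zsmul]⟩)) with hμ
  have hc0 : c ≠ 0 := by
    rw [hc]
    exact_mod_cast Nat.card_pos.ne'
  -- injectivity of zsmul by c on N
  have hNinj : ∀ a b : N, c • a = c • b → a = b := by
    intro a b h
    have h' := (int_smul_eq_zsmul ‹Module ℤ N› c a).trans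
      (h.trans (int_smul_eq_zsmul ‹Module ℤ N› c b).symm)
    exact smul_right_injective N hc0 h'
  -- every c • n is in the range of f
  have hexists : ∀ n : N, ∃ m : M, f m = c • n := by
    intro n
    have h1 : c • ((LinearMap.range f).mkQ n) = 0 := by
      rw [hc, natCast_zsmul]
      exact card_nsmul_eq_zero'
    have h2 : (LinearMap.range f).mkQ (c • n) = 0 := by
      rw [map_zsmul]; exact h1
    rw [Submodule.mkQ_apply, Submodule.Quotient.mk_eq_zero] at h2
    obtain ⟨m, hm⟩ := h2
    exact ⟨m, hm⟩
  let g : N → M := fun n => (hexists n).choose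
  have hg : ∀ n, f (g n) = c • n := fun n => (hexists n).choose_spec
  have hgadd : ∀ a b : N, g (a + b) = g a + g b := by
    intro a b
    apply hf
    rw [hg, map_add, hg, hg]
    exact map_add (zsmulAddGroupHom c) a b
  let ψ₀ : N →+ (M ⧸ (zsmulAddGroupHom c : M →+ M).range) :=
    AddMonoidHom.mk' (fun n => QuotientAddGroup.mk (g n))
      (by
        intro a b
        show (↑(g (a + b)) : M ⧸ (zsmulAddGroupHom c : M →+ M).range) = ↑(g a) + ↑(g b)
        rw [hgadd]
        rfl)
  have hψ₀ : ∀ n ∈ LinearMap.range f, ψ₀ n = 0 := by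
    rintro _ ⟨m₀, rfl⟩
    have hgm : g (f m₀) = c • m₀ := by
      apply hf
      rw [hg, map_zsmul]
    show QuotientAddGroup.mk (g (f m₀)) = 0
    rw [hgm, QuotientAddGroup.eq_zero_iff]
    exact ⟨m₀, rfl⟩
  let ψ : (N ⧸ LinearMap.range f) →+ (M ⧸ (zsmulAddGroupHom c : M →+ M).range) :=
    QuotientAddGroup.lift (LinearMap.range f).toAddSubgroup ψ₀ (fun n hn => hψ₀ n hn)
  have hψmk : ∀ n : N, ψ (Submodule.Quotient.mk n) = QuotientAddGroup.mk (g n) :=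
    fun n => rfl
  have hμmk : ∀ m : M, μ (QuotientAddGroup.mk m) = QuotientAddGroup.mk (f m) :=
    fun m => rfl
  have hker : ∀ x, ψ x ∈ μ.ker := by
    intro x
    obtain ⟨n, rfl⟩ := Submodule.Quotient.mk_surjective _ x
    rw [AddMonoidHom.mem_ker, hψmk, hμmk, hg]
    rw [QuotientAddGroup.eq_zero_iff]
    exact ⟨n, rfl⟩
  let Ψ : (N ⧸ LinearMap.range f) →+ μ.ker := ψ.codRestrict μ.ker hker
  have hbij : Function.Bijective Ψ := by
    constructor
    · rw [injective_iff_map_eq_zero]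
      intro x hx
      obtain ⟨n, rfl⟩ := Submodule.Quotient.mk_surjective _ x
      have h0 : ψ (Submodule.Quotient.mk n) = 0 := congrArg Subtype.val hx
      rw [hψmk, QuotientAddGroup.eq_zero_iff] at h0
      obtain ⟨m', hm'⟩ := h0
      have hfm' : f (g n) = c • f m' := by rw [← map_zsmul f, ← hm']; rfl
      have hne : n = f m' := hNinj n (f m') (by rw [← hg n, hfm'])
      rw [hne]
      exact (Submodule.Quotient.mk_eq_zero _).mpr ⟨m', rfl⟩
    · rintro ⟨x, hx⟩
      obtain ⟨m, rfl⟩ := QuotientAddGroup.mk_surjective x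
      rw [AddMonoidHom.mem_ker, hμmk, QuotientAddGroup.eq_zero_iff] at hx
      obtain ⟨n, hn⟩ := hx
      have hn' : f m = c • n := by rw [← hn]; rfl
      refine ⟨Submodule.Quotient.mk n, ?_⟩
      apply Subtype.ext
      show ψ (Submodule.Quotient.mk n) = _
      rw [hψmk]
      congr 1
      apply hf
      rw [hg, hn']
  exact ⟨(AddEquiv.ofBijective Ψ hbij).symm⟩
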